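/- Let α ∈ (0,1] and γ > 0. Let u : [0,∞) → ℂ be differentiable and satisfy u'(t) = −γ · u(t)/|u(t)|^α whenever u(t) ≠ 0, and u'(t) = 0 whenever u(t) = 0. Then u(t) = 0 for every t ≥ |u(0)|^α/(αγ). -/

import Mathlib

open Set Filter

private lemma normSq_rpow_half (α : ℝ) (z : ℂ) :
    Complex.normSq z ^ (α / 2) = ‖z‖ ^ α := by
  rw [← Complex.sq_norm, ← Real.rpow_natCast ‖z‖ 2,
    ← Real.rpow_mul (norm_nonneg z)]
  norm_num
  congr 1
  ring

private lemma u_contOn (α γ : ℝ) (u : ℝ → ℂ)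
    (hu : ∀ t, 0 ≤ t →
      (u t ≠ 0 → HasDerivWithinAt u
          (-(γ : ℂ) * u t / ((‖u t‖ ^ α : ℝ) : ℂ)) (Set.Ici (0 : ℝ)) t) ∧
      (u t = 0 → HasDerivWithinAt u 0 (Set.Ici (0 : ℝ)) t)) :
    ContinuousOn u (Set.Ici (0 : ℝ)) := by
  intro s hs
  by_cases h : u s = 0
  · exact ((hu s hs).2 h).continuousWithinAt
  · exact ((hu s hs).1 h).continuousWithinAt

private lemma key_lemma (α γ : ℝ) (hα : 0 < α) (hγ : 0 < γ) (u : ℝ → ℂ)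
    (hu : ∀ t, 0 ≤ t →
      (u t ≠ 0 → HasDerivWithinAt u
          (-(γ : ℂ) * u t / ((‖u t‖ ^ α : ℝ) : ℂ)) (Set.Ici (0 : ℝ)) t) ∧
      (u t = 0 → HasDerivWithinAt u 0 (Set.Ici (0 : ℝ)) t))
    (a b : ℝ) (ha : 0 ≤ a) (hab : a ≤ b)
    (hz : ∀ s ∈ Set.Icc a b, u s ≠ 0) :
    ‖u b‖ ^ α + α * γ * b = ‖u a‖ ^ α + α * γ * a := by
  set g : ℝ → ℝ := fun s => Complex.normSq (u s) ^ (α / 2) + α * γ * s with hg_def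
  have hsub : Set.Icc a b ⊆ Set.Ici (0 : ℝ) := fun x hx => le_trans ha hx.1
  have hcu : ContinuousOn u (Set.Icc a b) := (u_contOn α γ u hu).mono hsub
  have hcont : ContinuousOn g (Set.Icc a b) := by
    apply ContinuousOn.add
    · apply ContinuousOn.rpow_const
      · exact Complex.continuous_normSq.comp_continuousOn hcu
      · intro x _; right; positivity
    · exact (continuous_const.mul continuous_id).continuousOn
  have hderiv : ∀ x ∈ Set.Ico a b, HasDerivWithinAt g 0 (Set.Ici x) x := by
    intro x hx
    have hx0 : 0 ≤ x := le_trans ha hx.1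
    have hne : u x ≠ 0 := hz x ⟨hx.1, hx.2.le⟩
    set r : ℝ := ‖u x‖ with hr_def
    have hr : 0 < r := norm_pos_iff.mpr hne
    set c : ℝ := r ^ α with hc_def
    have hc : 0 < c := Real.rpow_pos_of_pos hr α
    set k : ℝ := -γ / c with hk_def
    have hd : HasDerivWithinAt u (-(γ : ℂ) * u x / ((c : ℝ) : ℂ)) (Set.Ici 0) x :=
      (hu x hx0).1 hne
    have hd2 : HasDerivWithinAt u ((k : ℂ) * u x) (Set.Ici x) x := by
      have heq : -(γ : ℂ) * u x / ((c : ℝ) : ℂ) = (k : ℂ) * u x := by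
        rw [hk_def]; push_cast; ring
      exact heq ▸ hd.mono (Set.Ici_subset_Ici.2 hx0)
    have hre : HasDerivWithinAt (fun s => (u s).re) (k * (u x).re) (Set.Ici x) x := by
      have := Complex.reCLM.hasFDerivAt.comp_hasDerivWithinAt x hd2
      simpa [Complex.re_ofReal_mul, Function.comp_def] using this
    have him : HasDerivWithinAt (fun s => (u s).im) (k * (u x).im) (Set.Ici x) x := by
      have := Complex.imCLM.hasFDerivAt.comp_hasDerivWithinAt x hd2
      simpa [Complex.im_ofReal_mul, Function.comp_def] using this
    have hw : HasDerivWithinAt (fun s => Complex.normSq (u s))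
        (2 * k * Complex.normSq (u x)) (Set.Ici x) x := by
      have h2 : HasDerivWithinAt (fun s => (u s).re * (u s).re + (u s).im * (u s).im)
          (2 * k * Complex.normSq (u x)) (Set.Ici x) x := by
        refine HasDerivWithinAt.congr_deriv ((hre.mul hre).add (him.mul him)) ?_
        simp only [Complex.normSq_apply]; ring
      simpa only [Complex.normSq_apply] using h2
    have hNpos : (0 : ℝ) < Complex.normSq (u x) := Complex.normSq_pos.mpr hne
    have hv : HasDerivWithinAt (fun s => Complex.normSq (u s) ^ (α / 2))
        ((2 * k * Complex.normSq (u x)) * (α / 2) * Complex.normSq (u x) ^ (α / 2 - 1))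
        (Set.Ici x) x := hw.rpow_const (Or.inl hNpos.ne')
    have hlin : HasDerivWithinAt (fun s : ℝ => α * γ * s) (α * γ) (Set.Ici x) x := by
      simpa using (hasDerivWithinAt_id x (Set.Ici x)).const_mul (α * γ)
    have hzero : (2 * k * Complex.normSq (u x)) * (α / 2) *
        Complex.normSq (u x) ^ (α / 2 - 1) + α * γ = 0 := by
      have e1 : Complex.normSq (u x) * Complex.normSq (u x) ^ (α / 2 - 1)
          = Complex.normSq (u x) ^ (α / 2) := by
        nth_rewrite 1 [← Real.rpow_one (Complex.normSq (u x))]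
        rw [← Real.rpow_add hNpos]; norm_num
      have e2 : Complex.normSq (u x) ^ (α / 2) = c := by
        rw [normSq_rpow_half]
      have e3 : k * c = -γ := by
        rw [hk_def]; field_simp
      have : (2 * k * Complex.normSq (u x)) * (α / 2) *
          Complex.normSq (u x) ^ (α / 2 - 1)
          = α * (k * c) := by
        rw [show (2 * k * Complex.normSq (u x)) * (α / 2) *
            Complex.normSq (u x) ^ (α / 2 - 1)
            = α * k * (Complex.normSq (u x) * Complex.normSq (u x) ^ (α / 2 - 1)) by ring,
          e1, e2]; ring
      rw [this, e3]; ring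
    have := hv.add hlin
    rw [hzero] at this
    exact this
  have := constant_of_has_deriv_right_zero hcont hderiv b ⟨hab, le_refl b⟩
  simpa [hg_def, normSq_rpow_half] using this

theorem stmt_10 (α γ : ℝ) (hα : 0 < α) (hα1 : α ≤ 1) (hγ : 0 < γ) (u : ℝ → ℂ)
    (hu : ∀ t, 0 ≤ t →
      (u t ≠ 0 → HasDerivWithinAt u
          (-(γ : ℂ) * u t / ((‖u t‖ ^ α : ℝ) : ℂ)) (Set.Ici (0 : ℝ)) t) ∧
      (u t = 0 → HasDerivWithinAt u 0 (Set.Ici (0 : ℝ)) t)) :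
    ∀ t, ‖u 0‖ ^ α / (α * γ) ≤ t → u t = 0 := by
  intro t ht
  have hT0 : (0 : ℝ) ≤ ‖u 0‖ ^ α / (α * γ) := by positivity
  have ht0 : 0 ≤ t := hT0.trans ht
  by_contra hne
  have hutpos : 0 < ‖u t‖ := norm_pos_iff.mpr hne
  by_cases hzero : ∃ s ∈ Set.Icc 0 t, u s = 0
  · -- u vanishes somewhere in [0,t]; look at the last zero
    obtain ⟨s₀, hs₀mem, hs₀⟩ := hzero
    set Z : Set ℝ := Set.Icc 0 t ∩ u ⁻¹' {0} with hZ_def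
    have hZc : IsClosed Z :=
      ContinuousOn.preimage_isClosed_of_isClosed
        ((u_contOn α γ u hu).mono (fun x hx => hx.1)) isClosed_Icc isClosed_singleton
    have hZne : Z.Nonempty := ⟨s₀, hs₀mem, hs₀⟩
    have hZbdd : BddAbove Z := BddAbove.mono Set.inter_subset_left bddAbove_Icc
    set m : ℝ := sSup Z with hm_def
    have hmZ : m ∈ Z := hZc.csSup_mem hZne hZbdd
    have hm0 : 0 ≤ m := hmZ.1.1
    have hmt : m ≤ t := hmZ.1.2
    have hum : u m = 0 := hmZ.2
    have hmlt : m < t := lt_of_le_of_ne hmt (fun h => hne (h ▸ hum))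
    -- find s ∈ (m, t] with |u s| < |u t|
    have h1 : Filter.Tendsto u (nhdsWithin m (Set.Ici 0)) (nhds 0) := by
      have := (u_contOn α γ u hu) m hm0
      rwa [ContinuousWithinAt, hum] at this
    have h2 : Filter.Tendsto (fun s => ‖u s‖) (nhdsWithin m (Set.Ici 0))
        (nhds 0) := by
      simpa using h1.norm
    have hev : ∀ᶠ s in nhdsWithin m (Set.Ici 0), ‖u s‖ < ‖u t‖ :=
      h2.eventually (eventually_lt_nhds hutpos)
    have hsub2 : Set.Ioc m t ⊆ Set.Ici (0 : ℝ) := fun x hx => le_trans hm0 hx.1.le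
    have hev' : ∀ᶠ s in nhdsWithin m (Set.Ioc m t), ‖u s‖ < ‖u t‖ :=
      hev.filter_mono (nhdsWithin_mono m hsub2)
    have hneBot : (nhdsWithin m (Set.Ioc m t)).NeBot := by
      rw [← mem_closure_iff_nhdsWithin_neBot, closure_Ioc hmlt.ne]
      exact Set.left_mem_Icc.2 hmlt.le
    obtain ⟨s, hslt, hsmem⟩ := (hev'.and eventually_mem_nhdsWithin).exists
    have hs0 : 0 ≤ s := le_trans hm0 hsmem.1.le
    have hzst : ∀ r ∈ Set.Icc s t, u r ≠ 0 := by
      intro r hr hr0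
      have hrZ : r ∈ Z := ⟨⟨le_trans hs0 hr.1, hr.2⟩, hr0⟩
      have : r ≤ m := le_csSup hZbdd hrZ
      exact absurd (lt_of_lt_of_le hsmem.1 hr.1) (not_lt.2 this)
    have hkey := key_lemma α γ hα hγ u hu s t hs0 hsmem.2 hzst
    have hlt2 : ‖u s‖ ^ α < ‖u t‖ ^ α :=
      Real.rpow_lt_rpow (norm_nonneg _) hslt hα
    have hst : s ≤ t := hsmem.2
    nlinarith [mul_pos (mul_pos hα hγ) (sub_pos.2 (lt_of_lt_of_le hsmem.1 hst) )]
  · push_neg at hzero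
    have hkey := key_lemma α γ hα hγ u hu 0 t le_rfl ht0 (fun s hs => hzero s hs)
    have hpos : 0 < ‖u t‖ ^ α := Real.rpow_pos_of_pos hutpos α
    have hge : ‖u 0‖ ^ α ≤ α * γ * t := by
      rw [div_le_iff₀ (by positivity)] at ht
      linarith [ht]
    linarith [hkey, hpos, hge]
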